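/- arXiv:1712.03389 — 5 statements merged into one kernel-verified Lean document; each statement's English description precedes it below -/
import Mathlib

section
/- For the synchronous dispersion process with M particles on the complete graph K_n: for every constant δ>0 there exist constants C>0 and n_0 such that for all n ≥ n_0, if the number of particles satisfies M ≤ (1/2)(1−δ)n, then with probability at least 1 − C/n the dispersion time satisfies T_Disp ≤ C·log n. -/
open MeasureTheory ProbabilityTheory
open scoped Classical BigOperators ENNReal

/-- The vertex of `K_n` (without loops) reached from `v` by the transition indexed by
`r : Fin (n-1)`: the `n - 1` possible values are exactly the vertices different from `v`. -/
noncomputable def knJump {n : ℕ} (v : Fin n) (r : Fin (n - 1)) : Fin n :=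
  have h : n - 1 + 1 = n := by have := r.pos; omega
  Fin.cast h ((Fin.cast h.symm v).succAbove r)

/-- The synchronous dispersion process on the complete graph `K_n` (without loops), with
`M` particles all starting at the origin vertex `o`.  `X t i` is the random transition
index used by particle `i` at step `t` (consulted only when particle `i` is unhappy,
i.e. shares its vertex with another particle).  `knPos o X t i` is the position of
particle `i` at time step `t`. -/
noncomputable def knPos {n M : ℕ} (o : Fin n) (X : ℕ → Fin M → Fin (n - 1)) :
    ℕ → Fin M → Fin n
  | 0 => fun _ => o
  | t + 1 => fun i =>
      if ∃ j, j ≠ i ∧ knPos o X t j = knPos o X t i then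
        knJump (knPos o X t i) (X t i)
      else knPos o X t i

lemma knJump_injective {n : ℕ} (v : Fin n) : Function.Injective (knJump v) := by
  intro a b hab
  have hv := congrArg Fin.val hab
  simp only [knJump, Fin.coe_cast] at hv
  exact Fin.succAbove_right_injective (Fin.val_injective hv)

lemma knPos_congr {n M : ℕ} (o : Fin n) (Y Y' : ℕ → Fin M → Fin (n-1)) :
    ∀ t, (∀ s, s < t → Y s = Y' s) → knPos o Y t = knPos o Y' t := by
  intro t
  induction t with
  | zero => intro _; rfl
  | succ t ih =>
    intro h
    have ht : knPos o Y t = knPos o Y' t := ih fun s hs => h s (Nat.lt_succ_of_lt hs)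
    funext i
    simp only [knPos, ht, h t (Nat.lt_succ_self t)]

private lemma meas_all {α : Type*} [Countable α] [MeasurableSpace α]
    [MeasurableSingletonClass α] (s : Set α) : MeasurableSet s :=
  s.to_countable.measurableSet

private lemma meas_eq_set {Ω γ : Type*} [MeasurableSpace Ω] [Countable γ] [MeasurableSpace γ]
    [MeasurableSingletonClass γ] {f g : Ω → γ} (hf : Measurable f) (hg : Measurable g) :
    MeasurableSet {ω | f ω = g ω} := by
  have h : {ω | f ω = g ω} = (fun ω => (f ω, g ω)) ⁻¹' {p : γ × γ | p.1 = p.2} := rfl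
  rw [h]
  exact (hf.prodMk hg) (meas_all _)

private lemma measure_eq_sum_fiber {Ω γ : Type*} [MeasurableSpace Ω] [Fintype γ]
    (P : Measure Ω) (f : Ω → γ) (hf : ∀ a : γ, MeasurableSet (f ⁻¹' {a}))
    (E : Set Ω) (hE : MeasurableSet E) :
    P E = ∑ a : γ, P (f ⁻¹' {a} ∩ E) := by
  have key : E = ⋃ a ∈ (Finset.univ : Finset γ), f ⁻¹' {a} ∩ E := by
    ext ω; simp
  have h2 : P (⋃ a ∈ (Finset.univ : Finset γ), f ⁻¹' {a} ∩ E)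
      = ∑ a : γ, P (f ⁻¹' {a} ∩ E) := by
    refine measure_biUnion_finset ?_ fun a _ => (hf a).inter hE
    intro a _ b _ hab
    refine Set.disjoint_left.2 ?_
    rintro ω ⟨h1, -⟩ ⟨h2, -⟩
    exact hab (by rw [← h1, ← h2])
  rw [← key] at h2
  exact h2

set_option maxHeartbeats 2000000 in
/-- Dispersion on `K_n` with at most `(1/2)(1-δ)n` particles finishes in `O(log n)`
steps with probability `1 - O(1/n)`. -/
theorem dispersion_complete_graph_fast :
    ∀ δ : ℝ, 0 < δ →
    ∃ C : ℝ, 0 < C ∧ ∃ n₀ : ℕ, ∀ n : ℕ, n₀ ≤ n →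
    ∀ M : ℕ, (M : ℝ) ≤ (1 / 2) * (1 - δ) * n →
    ∀ (Ω : Type) (_ : MeasurableSpace Ω) (P : Measure Ω), IsProbabilityMeasure P →
    ∀ (X : ℕ → Fin M → Ω → Fin (n - 1)) (o : Fin n),
    (∀ t i, Measurable (X t i)) →
    (∀ t i (v : Fin (n - 1)), (P {ω | X t i ω = v}).toReal = 1 / ((n : ℝ) - 1)) →
    iIndepFun (fun ti : ℕ × Fin M => X ti.1 ti.2) P →
    (P {ω | ∃ t : ℕ, (t : ℝ) ≤ C * Real.log n ∧
        Function.Injective (knPos o (fun s j => X s j ω) t)}).toReal ≥ 1 - C / n := by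
  intro δ hδ
  have hδ'pos : 0 < min δ (1/2) := lt_min hδ (by norm_num)
  set δ' : ℝ := min δ (1/2) with hδ'def
  have hδ'le : δ' ≤ 1/2 := min_le_right _ _
  have hδ'δ : δ' ≤ δ := min_le_left _ _
  have h1δpos : 0 < 1 - δ' := by linarith
  have h1δlt : 1 - δ' < 1 := by linarith
  have hL : 0 < -Real.log (1 - δ') := by
    have := Real.log_neg h1δpos h1δlt; linarith
  set L : ℝ := -Real.log (1 - δ') with hLdef
  have hC2 : 2 ≤ 2 / L + 2 := by
    have : 0 ≤ 2 / L := by positivity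
    linarith
  set C : ℝ := 2 / L + 2 with hCdef
  have hC : 0 < C := by linarith
  refine ⟨C, hC, 3, ?_⟩
  intro n hn M hM Ω mΩ P hP X o hXmeas hXunif hXindep
  -- basic numerics
  have hn3 : (3:ℝ) ≤ (n:ℝ) := by exact_mod_cast hn
  have hnpos : (0:ℝ) < n := by linarith
  have hn1 : 2 ≤ n - 1 := by omega
  have hn1R : (0:ℝ) < ((n-1:ℕ):ℝ) := by
    have : (2:ℝ) ≤ ((n-1:ℕ):ℝ) := by exact_mod_cast hn1
    linarith
  have hn1cast : ((n-1:ℕ):ℝ) = (n:ℝ) - 1 := by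
    have : 1 ≤ n := by omega
    push_cast [Nat.cast_sub this]
    ring
  have hMreal : (M:ℝ) ≤ (n:ℝ) := by nlinarith [hM]
  have hcoef : ((2*M-1:ℕ):ℝ) ≤ (1-δ') * ((n-1:ℕ):ℝ) := by
    rcases Nat.eq_zero_or_pos M with h0 | hMpos
    · subst h0; simp; positivity
    · have h1 : ((2*M-1:ℕ):ℝ) = 2*(M:ℝ) - 1 := by
        push_cast [Nat.cast_sub (by omega : 1 ≤ 2*M)]; ring
      rw [h1, hn1cast]
      have h2 : 2*(M:ℝ) ≤ (1-δ) * n := by nlinarith [hM]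
      have h3 : (1-δ) * n ≤ (1-δ') * n := by nlinarith
      nlinarith
  -- process
  set pos : ℕ → Fin M → Ω → Fin n := fun t i ω => knPos o (fun s j => X s j ω) t i with hposdef
  have hpos_succ : ∀ (t : ℕ) (i : Fin M) (ω : Ω), pos (t+1) i ω =
      if ∃ j, j ≠ i ∧ pos t j ω = pos t i ω then knJump (pos t i ω) (X t i ω)
      else pos t i ω := fun t i ω => rfl
  set U : Fin M → ℕ → Set Ω := fun i t => {ω | ∃ j, j ≠ i ∧ pos t j ω = pos t i ω} with hUdef
  have hposmeas : ∀ (t : ℕ) (i : Fin M), Measurable (pos t i) := by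
    intro t
    induction t with
    | zero => intro i; exact measurable_const
    | succ t ih =>
      intro i
      have hUm : MeasurableSet (U i t) := by
        have h : U i t = ⋃ j, ⋃ (_ : j ≠ i), {ω | pos t j ω = pos t i ω} := by
          ext ω; simp [hUdef]
        rw [h]
        exact MeasurableSet.iUnion fun j => MeasurableSet.iUnion fun _ =>
          meas_eq_set (ih j) (ih i)
      have heq : pos (t+1) i = fun ω =>
          if ω ∈ U i t then knJump (pos t i ω) (X t i ω) else pos t i ω := by
        funext ω
        rw [hpos_succ]
        rfl
      rw [heq]
      exact Measurable.ite hUm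
        ((measurable_of_countable (fun p : Fin n × Fin (n-1) => knJump p.1 p.2)).comp
          ((ih i).prodMk (hXmeas t i))) (ih i)
  have hUmeas : ∀ (i : Fin M) (t : ℕ), MeasurableSet (U i t) := by
    intro i t
    have h : U i t = ⋃ j, ⋃ (_ : j ≠ i), {ω | pos t j ω = pos t i ω} := by
      ext ω; simp [hUdef]
    rw [h]
    exact MeasurableSet.iUnion fun j => MeasurableSet.iUnion fun _ =>
      meas_eq_set (hposmeas t j) (hposmeas t i)
  -- uniform distribution in ENNReal
  set q : ℝ≥0∞ := (((n-1:ℕ) : ℝ≥0∞))⁻¹ with hqdef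
  have hq' : q = ENNReal.ofReal ((((n-1:ℕ):ℝ))⁻¹) := by
    rw [ENNReal.ofReal_inv_of_pos hn1R, ENNReal.ofReal_natCast]
  have hq : ∀ t i v, P {ω | X t i ω = v} = q := by
    intro t i v
    have hne := measure_ne_top P {ω | X t i ω = v}
    rw [← ENNReal.ofReal_toReal hne, hXunif t i v, hq']
    congr 1
    rw [hn1cast]
    exact one_div _
    -- pairwise independence values
  have hxy : ∀ (t : ℕ) (i j : Fin M), i ≠ j → ∀ (x y : Fin (n-1)),
      P ({ω | X t i ω = x} ∩ {ω | X t j ω = y}) = q * q := by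
    intro t i j hij x y
    have hne : ((t,i) : ℕ × Fin M) ≠ (t,j) := by
      intro h; exact hij (congrArg Prod.snd h)
    have h := (hXindep.indepFun hne).measure_inter_preimage_eq_mul
      ({x} : Set (Fin (n-1))) ({y} : Set (Fin (n-1))) (meas_all _) (meas_all _)
    have e1 : (fun ti : ℕ × Fin M => X ti.1 ti.2) (t,i) ⁻¹' {x} = {ω | X t i ω = x} := rfl
    have e2 : (fun ti : ℕ × Fin M => X ti.1 ti.2) (t,j) ⁻¹' {y} = {ω | X t j ω = y} := rfl
    rw [e1, e2] at h
    rw [h, hq t i x, hq t j y]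
  -- independence of the past from the pair at time t
  have hpastmeas : ∀ t : ℕ, Measurable (fun ω (s : Fin t) (j : Fin M) => X s j ω) := by
    intro t
    exact measurable_pi_lambda _ fun s => measurable_pi_lambda _ fun j => hXmeas s j
  have hInd : ∀ (t : ℕ) (i j : Fin M), i ≠ j →
      IndepFun (fun ω (s : Fin t) (j : Fin M) => X s j ω)
        (fun ω => (X t i ω, X t j ω)) P := by
    intro t i j hij
    set S : Finset (ℕ × Fin M) := Finset.range t ×ˢ (Finset.univ : Finset (Fin M)) with hSdef
    set T : Finset (ℕ × Fin M) := {(t,i),(t,j)} with hTdef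
    have hdisj : Disjoint S T := by
      rw [Finset.disjoint_left]
      intro p hp hp'
      obtain ⟨h1, -⟩ := Finset.mem_product.1 hp
      have h1' := Finset.mem_range.1 h1
      rcases Finset.mem_insert.1 hp' with rfl | h2
      · exact absurd h1' (lt_irrefl t)
      · rw [Finset.mem_singleton] at h2
        subst h2
        exact absurd h1' (lt_irrefl t)
    have base := hXindep.indepFun_finset S T hdisj (fun k => hXmeas k.1 k.2)
    have hφ : Measurable (fun g : {p : ℕ × Fin M // p ∈ S} → Fin (n-1) =>
        (fun (s : Fin t) (j : Fin M) => g ⟨(s.1, j), by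
          simp [hSdef, Finset.mem_product, Finset.mem_range, s.isLt]⟩)) :=
      measurable_of_countable _
    have hψ : Measurable (fun g : {p : ℕ × Fin M // p ∈ T} → Fin (n-1) =>
        (g ⟨(t,i), by simp [hTdef]⟩, g ⟨(t,j), by simp [hTdef]⟩)) :=
      measurable_of_countable _
    exact base.comp hφ hψ
  -- pair measure bound
  have pairB : ∀ (t : ℕ) (i j : Fin M), i ≠ j → ∀ (B : Set (Fin (n-1) × Fin (n-1))),
      ((∀ y x₁ x₂, (x₁,y) ∈ B → (x₂,y) ∈ B → x₁ = x₂) ∨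
       (∀ x y₁ y₂, (x,y₁) ∈ B → (x,y₂) ∈ B → y₁ = y₂)) →
      P ((fun ω => (X t i ω, X t j ω)) ⁻¹' B) ≤ q := by
    intro t i j hij B hinj
    set Bf : Finset (Fin (n-1) × Fin (n-1)) := Finset.univ.filter (· ∈ B) with hBfdef
    have hcard : Bf.card ≤ n - 1 := by
      rcases hinj with h | h
      · have := Finset.card_le_card_of_injOn (s := Bf) (t := Finset.univ) (fun p : Fin (n-1) × Fin (n-1) => p.2)
          (fun p _ => Finset.mem_univ p.2)
          (fun p₁ hp₁ p₂ hp₂ hpp => by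
            have hpp' : p₁.2 = p₂.2 := hpp
            have hb₁ : p₁ ∈ B := by
              have hm := Finset.mem_coe.1 hp₁
              rw [hBfdef, Finset.mem_filter] at hm
              exact hm.2
            have hb₂ : p₂ ∈ B := by
              have hm := Finset.mem_coe.1 hp₂
              rw [hBfdef, Finset.mem_filter] at hm
              exact hm.2
            have h1 : p₁.1 = p₂.1 := h p₂.2 p₁.1 p₂.1
              (by rw [← hpp', Prod.mk.eta]; exact hb₁)
              (by rw [Prod.mk.eta]; exact hb₂)
            exact Prod.ext h1 hpp')
        simpa [Fintype.card_fin] using this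
      · have := Finset.card_le_card_of_injOn (s := Bf) (t := Finset.univ) (fun p : Fin (n-1) × Fin (n-1) => p.1)
          (fun p _ => Finset.mem_univ p.1)
          (fun p₁ hp₁ p₂ hp₂ hpp => by
            have hpp' : p₁.1 = p₂.1 := hpp
            have hb₁ : p₁ ∈ B := by
              have hm := Finset.mem_coe.1 hp₁
              rw [hBfdef, Finset.mem_filter] at hm
              exact hm.2
            have hb₂ : p₂ ∈ B := by
              have hm := Finset.mem_coe.1 hp₂
              rw [hBfdef, Finset.mem_filter] at hm
              exact hm.2
            have h2 : p₁.2 = p₂.2 := h p₂.1 p₁.2 p₂.2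
              (by rw [← hpp', Prod.mk.eta]; exact hb₁)
              (by rw [Prod.mk.eta]; exact hb₂)
            exact Prod.ext hpp' h2)
        simpa [Fintype.card_fin] using this
    have hcover : (fun ω => (X t i ω, X t j ω)) ⁻¹' B =
        ⋃ p ∈ Bf, ({ω | X t i ω = p.1} ∩ {ω | X t j ω = p.2}) := by
      ext ω
      simp only [Set.mem_preimage, Set.mem_iUnion, Set.mem_inter_iff, Set.mem_setOf_eq,
        hBfdef, Finset.mem_filter, Finset.mem_univ, true_and]
      constructor
      · intro hmem
        exact ⟨(X t i ω, X t j ω), hmem, rfl, rfl⟩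
      · rintro ⟨p, hp, h1, h2⟩
        have : (X t i ω, X t j ω) = p := Prod.ext h1 h2
        rw [this]; exact hp
    calc P ((fun ω => (X t i ω, X t j ω)) ⁻¹' B)
        ≤ ∑ p ∈ Bf, P ({ω | X t i ω = p.1} ∩ {ω | X t j ω = p.2}) := by
          rw [hcover]; exact measure_biUnion_finset_le _ _
      _ = ∑ _p ∈ Bf, q * q := Finset.sum_congr rfl fun p _ => hxy t i j hij p.1 p.2
      _ = (Bf.card : ℝ≥0∞) * (q * q) := by rw [Finset.sum_const, nsmul_eq_mul]
      _ ≤ ((n-1:ℕ) : ℝ≥0∞) * (q * q) :=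
          mul_le_mul_left (by exact_mod_cast hcard) _
      _ = q := by
          rw [hqdef, ← mul_assoc, ENNReal.mul_inv_cancel (by exact_mod_cast (by omega : (n-1:ℕ) ≠ 0)) (ENNReal.natCast_ne_top _), one_mul]
    -- core collision estimate
  have key : ∀ (t : ℕ) (i j : Fin M), i ≠ j →
      P {ω | pos (t+1) i ω = pos (t+1) j ω} ≤ q * (P (U i t) + P (U j t)) := by
    intro t i j hij
    set z : Fin (n-1) := ⟨0, by omega⟩ with hzdef
    set pvec : Ω → (Fin t → Fin M → Fin (n-1)) := fun ω (s : Fin t) (k : Fin M) => X s k ω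
      with hpvecdef
    set ext : (Fin t → Fin M → Fin (n-1)) → ℕ → Fin M → Fin (n-1) :=
      fun a s k => if h : s < t then a ⟨s, h⟩ k else z with hextdef
    set pOf : (Fin t → Fin M → Fin (n-1)) → Fin M → Fin n := fun a => knPos o (ext a) t
      with hpOfdef
    have hrep : ∀ (ω : Ω) (k : Fin M), pos t k ω = pOf (pvec ω) k := by
      intro ω k
      have := knPos_congr o (fun s j => X s j ω) (ext (pvec ω)) t (by
        intro s hs
        funext k'
        simp [hextdef, hs, hpvecdef])
      exact congrFun this k
    set unh : (Fin t → Fin M → Fin (n-1)) → Fin M → Prop :=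
      fun a k => ∃ l, l ≠ k ∧ pOf a l = pOf a k with hunhdef
    have hUa : ∀ (ω : Ω) (k : Fin M), ω ∈ U k t ↔ unh (pvec ω) k := by
      intro ω k
      simp only [hUdef, Set.mem_setOf_eq, hunhdef, hrep]
    set B : (Fin t → Fin M → Fin (n-1)) → Set (Fin (n-1) × Fin (n-1)) := fun a =>
      {p | (if unh a i then knJump (pOf a i) p.1 else pOf a i) =
           (if unh a j then knJump (pOf a j) p.2 else pOf a j)} with hBdef
    have hColl : ∀ (a : Fin t → Fin M → Fin (n-1)) (ω : Ω), pvec ω = a →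
        (pos (t+1) i ω = pos (t+1) j ω ↔ (X t i ω, X t j ω) ∈ B a) := by
      intro a ω ha
      have e1 : pos (t+1) i ω = (if unh a i then knJump (pOf a i) (X t i ω) else pOf a i) := by
        rw [hpos_succ]
        by_cases hu : unh a i
        · rw [if_pos (by rw [← ha] at hu; exact (hUa ω i).2 hu), if_pos hu, hrep, ha]
        · rw [if_neg (fun hc => hu (by rw [← ha]; exact (hUa ω i).1 hc)), if_neg hu, hrep, ha]
      have e2 : pos (t+1) j ω = (if unh a j then knJump (pOf a j) (X t j ω) else pOf a j) := by
        rw [hpos_succ]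
        by_cases hu : unh a j
        · rw [if_pos (by rw [← ha] at hu; exact (hUa ω j).2 hu), if_pos hu, hrep, ha]
        · rw [if_neg (fun hc => hu (by rw [← ha]; exact (hUa ω j).1 hc)), if_neg hu, hrep, ha]
      rw [e1, e2]
      exact Iff.rfl
    have hfibm : ∀ a : Fin t → Fin M → Fin (n-1), MeasurableSet (pvec ⁻¹' {a}) :=
      fun a => hpastmeas t (meas_all _)
    have hCollMeas : MeasurableSet {ω | pos (t+1) i ω = pos (t+1) j ω} :=
      meas_eq_set (hposmeas (t+1) i) (hposmeas (t+1) j)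
    have hsplit := measure_eq_sum_fiber P pvec hfibm _ hCollMeas
    have hterm : ∀ a : Fin t → Fin M → Fin (n-1),
        P (pvec ⁻¹' {a} ∩ {ω | pos (t+1) i ω = pos (t+1) j ω}) =
        P (pvec ⁻¹' {a}) * P ((fun ω => (X t i ω, X t j ω)) ⁻¹' (B a)) := by
      intro a
      have hset : pvec ⁻¹' {a} ∩ {ω | pos (t+1) i ω = pos (t+1) j ω} =
          pvec ⁻¹' {a} ∩ (fun ω => (X t i ω, X t j ω)) ⁻¹' (B a) := by
        ext ω
        simp only [Set.mem_inter_iff, Set.mem_preimage, Set.mem_singleton_iff, Set.mem_setOf_eq]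
        exact and_congr_right fun hω => hColl a ω hω
      rw [hset]
      exact (hInd t i j hij).measure_inter_preimage_eq_mul {a} (B a) (meas_all _) (meas_all _)
    have hB : ∀ a : Fin t → Fin M → Fin (n-1),
        P ((fun ω => (X t i ω, X t j ω)) ⁻¹' (B a)) ≤
          (if unh a i then q else 0) + (if unh a j then q else 0) := by
      intro a
      by_cases hi : unh a i
      · have hbound : P ((fun ω => (X t i ω, X t j ω)) ⁻¹' (B a)) ≤ q := by
          refine pairB t i j hij (B a) (Or.inl ?_)
          intro y x₁ x₂ h1 h2
          simp only [hBdef, Set.mem_setOf_eq, if_pos hi] at h1 h2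
          exact knJump_injective _ (h1.trans h2.symm)
        calc P ((fun ω => (X t i ω, X t j ω)) ⁻¹' (B a)) ≤ q := hbound
          _ ≤ _ := by rw [if_pos hi]; exact le_add_right le_rfl
      · by_cases hj : unh a j
        · have hbound : P ((fun ω => (X t i ω, X t j ω)) ⁻¹' (B a)) ≤ q := by
            refine pairB t i j hij (B a) (Or.inr ?_)
            intro x y₁ y₂ h1 h2
            simp only [hBdef, Set.mem_setOf_eq, if_pos hj, if_neg hi] at h1 h2
            exact knJump_injective _ (h1.symm.trans h2)
          calc P ((fun ω => (X t i ω, X t j ω)) ⁻¹' (B a)) ≤ q := hbound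
            _ ≤ _ := by rw [if_pos hj]; exact le_add_left le_rfl
        · have hempty : B a = ∅ := by
            ext p
            simp only [hBdef, Set.mem_setOf_eq, if_neg hi, if_neg hj, Set.mem_empty_iff_false,
              iff_false]
            intro hc
            exact hi ⟨j, Ne.symm hij, hc.symm⟩
          rw [hempty]
          simp
    -- put together
    have hUk : ∀ k : Fin M, P (U k t) =
        ∑ a : Fin t → Fin M → Fin (n-1), (if unh a k then P (pvec ⁻¹' {a}) else 0) := by
      intro k
      rw [measure_eq_sum_fiber P pvec hfibm (U k t) (hUmeas k t)]
      refine Finset.sum_congr rfl fun a _ => ?_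
      by_cases hk : unh a k
      · rw [if_pos hk]
        congr 1
        refine Set.inter_eq_left.2 fun ω hω => ?_
        have : pvec ω = a := hω
        exact (hUa ω k).2 (this ▸ hk)
      · rw [if_neg hk]
        have hem : pvec ⁻¹' {a} ∩ U k t = ∅ := by
          refine Set.eq_empty_iff_forall_notMem.2 fun ω hω => ?_
          have h1 : pvec ω = a := hω.1
          exact hk (h1 ▸ (hUa ω k).1 hω.2)
        rw [hem, measure_empty]
    calc P {ω | pos (t+1) i ω = pos (t+1) j ω}
        = ∑ a : Fin t → Fin M → Fin (n-1),
            P (pvec ⁻¹' {a} ∩ {ω | pos (t+1) i ω = pos (t+1) j ω}) := hsplit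
      _ = ∑ a : Fin t → Fin M → Fin (n-1),
            P (pvec ⁻¹' {a}) * P ((fun ω => (X t i ω, X t j ω)) ⁻¹' (B a)) :=
          Finset.sum_congr rfl fun a _ => hterm a
      _ ≤ ∑ a : Fin t → Fin M → Fin (n-1),
            P (pvec ⁻¹' {a}) * ((if unh a i then q else 0) + (if unh a j then q else 0)) :=
          Finset.sum_le_sum fun a _ => mul_le_mul_right (hB a) _
      _ = ∑ a : Fin t → Fin M → Fin (n-1),
            (q * (if unh a i then P (pvec ⁻¹' {a}) else 0) +
             q * (if unh a j then P (pvec ⁻¹' {a}) else 0)) := by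
          refine Finset.sum_congr rfl fun a _ => ?_
          by_cases hi : unh a i <;> by_cases hj : unh a j <;>
            simp [hi, hj, mul_comm, mul_add, add_mul]
      _ = q * P (U i t) + q * P (U j t) := by
          rw [Finset.sum_add_distrib, ← Finset.mul_sum, ← Finset.mul_sum, ← hUk i, ← hUk j]
      _ = q * (P (U i t) + P (U j t)) := by rw [mul_add]
    -- drift
  have hUsucc : ∀ (t : ℕ) (i : Fin M), P (U i (t+1)) ≤
      ∑ j ∈ Finset.univ.erase i, P {ω | pos (t+1) j ω = pos (t+1) i ω} := by
    intro t i
    have hsub : U i (t+1) ⊆ ⋃ j ∈ Finset.univ.erase i, {ω | pos (t+1) j ω = pos (t+1) i ω} := by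
      intro ω hω
      obtain ⟨j, hj, hje⟩ := hω
      exact Set.mem_biUnion (Finset.mem_erase.2 ⟨hj, Finset.mem_univ j⟩) hje
    exact le_trans (measure_mono hsub) (measure_biUnion_finset_le _ _)
  have edrift : ∀ t : ℕ, (∑ i, P (U i (t+1))) ≤
      ((2*M-1:ℕ) : ℝ≥0∞) * q * (∑ i, P (U i t)) := by
    intro t
    have h1 : ∀ i : Fin M, P (U i (t+1)) ≤
        q * ((∑ k, P (U k t)) + ((M-1:ℕ):ℝ≥0∞) * P (U i t)) := by
      intro i
      calc P (U i (t+1)) ≤ ∑ j ∈ Finset.univ.erase i, P {ω | pos (t+1) j ω = pos (t+1) i ω} :=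
            hUsucc t i
        _ ≤ ∑ j ∈ Finset.univ.erase i, q * (P (U j t) + P (U i t)) :=
            Finset.sum_le_sum fun j hj => key t j i (Finset.mem_erase.1 hj).1
        _ = q * ((∑ j ∈ Finset.univ.erase i, P (U j t)) +
              ((Finset.univ.erase i).card : ℝ≥0∞) * P (U i t)) := by
            rw [← Finset.mul_sum, Finset.sum_add_distrib, Finset.sum_const, nsmul_eq_mul]
        _ ≤ q * ((∑ k, P (U k t)) + ((M-1:ℕ):ℝ≥0∞) * P (U i t)) := by
            have hc : (Finset.univ.erase i).card = M - 1 := by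
              rw [Finset.card_erase_of_mem (Finset.mem_univ i), Finset.card_univ,
                Fintype.card_fin]
            rw [hc]
            exact mul_le_mul_right
              (add_le_add_left
                (Finset.sum_le_sum_of_subset (Finset.subset_univ _)) _) _
    calc (∑ i, P (U i (t+1)))
        ≤ ∑ i : Fin M, q * ((∑ k, P (U k t)) + ((M-1:ℕ):ℝ≥0∞) * P (U i t)) :=
          Finset.sum_le_sum fun i _ => h1 i
      _ = q * (((M:ℕ):ℝ≥0∞) * (∑ k, P (U k t)) + ((M-1:ℕ):ℝ≥0∞) * (∑ k, P (U k t))) := by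
          rw [← Finset.mul_sum, Finset.sum_add_distrib, Finset.sum_const, Finset.card_univ,
            Fintype.card_fin, nsmul_eq_mul, ← Finset.mul_sum]
      _ = ((2*M-1:ℕ):ℝ≥0∞) * q * (∑ k, P (U k t)) := by
          rw [← add_mul]
          have hadd : ((M:ℕ):ℝ≥0∞) + ((M-1:ℕ):ℝ≥0∞) = ((2*M-1:ℕ):ℝ≥0∞) := by
            rw [← Nat.cast_add]
            congr 1
            omega
          rw [hadd]
          ring
  have hρ : ((2*M-1:ℕ):ℝ≥0∞) * q ≤ ENNReal.ofReal (1-δ') := by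
    have h1 : ((2*M-1:ℕ):ℝ≥0∞) = ENNReal.ofReal ((2*M-1:ℕ):ℝ) := (ENNReal.ofReal_natCast _).symm
    rw [h1, hq', ← ENNReal.ofReal_mul (by positivity)]
    refine ENNReal.ofReal_le_ofReal ?_
    calc ((2*M-1:ℕ):ℝ) * (((n-1:ℕ):ℝ))⁻¹
        ≤ ((1-δ') * ((n-1:ℕ):ℝ)) * (((n-1:ℕ):ℝ))⁻¹ :=
          mul_le_mul_of_nonneg_right hcoef (inv_nonneg.2 hn1R.le)
      _ = 1-δ' := by
          rw [mul_assoc, mul_inv_cancel₀ hn1R.ne', mul_one]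
  have emain : ∀ T : ℕ, (∑ i, P (U i T)) ≤ ENNReal.ofReal ((1-δ')^T) * (M:ℝ≥0∞) := by
    intro T
    induction T with
    | zero =>
      simp only [pow_zero, ENNReal.ofReal_one, one_mul]
      calc (∑ i : Fin M, P (U i 0)) ≤ ∑ _i : Fin M, 1 :=
            Finset.sum_le_sum fun i _ => prob_le_one
        _ = (M:ℝ≥0∞) := by
            rw [Finset.sum_const, Finset.card_univ, Fintype.card_fin, nsmul_eq_mul, mul_one]
    | succ T ih =>
      calc (∑ i, P (U i (T+1))) ≤ ((2*M-1:ℕ):ℝ≥0∞) * q * (∑ i, P (U i T)) := edrift T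
        _ ≤ ENNReal.ofReal (1-δ') * (ENNReal.ofReal ((1-δ')^T) * (M:ℝ≥0∞)) :=
            mul_le_mul' hρ ih
        _ = ENNReal.ofReal ((1-δ')^(T+1)) * (M:ℝ≥0∞) := by
            rw [← mul_assoc, ← ENNReal.ofReal_mul h1δpos.le, ← pow_succ']
  -- choice of time and numerics
  set T : ℕ := ⌈(2/L) * Real.log n⌉₊ with hTdef
  have hlog1 : 1 ≤ Real.log n := by
    rw [Real.le_log_iff_exp_le hnpos]
    calc Real.exp 1 ≤ 2.7182818286 := Real.exp_one_lt_d9.le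
      _ ≤ 3 := by norm_num
      _ ≤ (n:ℝ) := hn3
  have hTle : (T:ℝ) ≤ C * Real.log n := by
    have h0 : 0 ≤ (2/L) * Real.log n := mul_nonneg (by positivity) (by linarith)
    have h1 : (T:ℝ) < (2/L) * Real.log n + 1 := Nat.ceil_lt_add_one h0
    have h2 : C * Real.log n = (2/L) * Real.log n + 2 * Real.log n := by rw [hCdef]; ring
    have h3 : (1:ℝ) ≤ 2 * Real.log n := by linarith
    clear_value T C L
    linarith
  have hTge : (2/L) * Real.log n ≤ (T:ℝ) := Nat.le_ceil _
  have hlogpow : (1-δ')^T = Real.exp ((T:ℝ) * Real.log (1-δ')) := by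
    rw [Real.exp_nat_mul, Real.exp_log h1δpos]
  have harg : (T:ℝ) * Real.log (1-δ') ≤ -(2 * Real.log n) := by
    have hTL : 2 * Real.log n ≤ (T:ℝ) * L := by
      have := mul_le_mul_of_nonneg_right hTge hL.le
      calc 2 * Real.log n = ((2/L) * Real.log n) * L := by field_simp
        _ ≤ (T:ℝ) * L := this
    have hLlog : Real.log (1-δ') = -L := by rw [hLdef]; ring
    rw [hLlog]
    linarith
  have hexp2 : Real.exp (2 * Real.log n) = (n:ℝ)^2 := by
    rw [show (2:ℝ) * Real.log n = Real.log n + Real.log n by ring, Real.exp_add,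
      Real.exp_log hnpos]
    ring
  have hpowT : (1-δ')^T ≤ 1/((n:ℝ)^2) := by
    rw [hlogpow, show (1:ℝ)/((n:ℝ)^2) = Real.exp (-(2*Real.log n)) by
      rw [Real.exp_neg, hexp2, one_div]]
    exact Real.exp_le_exp.2 harg
  have hfinal : ENNReal.ofReal ((1-δ')^T) * (M:ℝ≥0∞) ≤ ENNReal.ofReal (C/n) := by
    rw [show (M:ℝ≥0∞) = ENNReal.ofReal (M:ℝ) from (ENNReal.ofReal_natCast M).symm,
      ← ENNReal.ofReal_mul (by positivity)]
    refine ENNReal.ofReal_le_ofReal ?_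
    calc (1-δ')^T * (M:ℝ) ≤ (1/((n:ℝ)^2)) * (n:ℝ) := by
          refine mul_le_mul hpowT hMreal (by positivity) (by positivity)
      _ = 1/(n:ℝ) := by field_simp
      _ ≤ C/(n:ℝ) := by gcongr; linarith
  -- final assembly
  have hBad : P (⋃ i, U i T) ≤ ENNReal.ofReal (C / n) := by
    calc P (⋃ i, U i T) ≤ ∑' i : Fin M, P (U i T) := measure_iUnion_le _
      _ = ∑ i, P (U i T) := tsum_fintype _
      _ ≤ _ := le_trans (emain T) hfinal
  have hsubset : (⋃ i, U i T)ᶜ ⊆ {ω | ∃ t : ℕ, (t:ℝ) ≤ C * Real.log n ∧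
      Function.Injective (knPos o (fun s j => X s j ω) t)} := by
    intro ω hω
    refine ⟨T, hTle, ?_⟩
    intro a b hab
    by_contra hne
    exact hω (Set.mem_iUnion.2 ⟨b, a, hne, hab⟩)
  have hcompl : P ((⋃ i, U i T)ᶜ) = 1 - P (⋃ i, U i T) := by
    rw [measure_compl (MeasurableSet.iUnion fun i => hUmeas i T) (measure_ne_top P _),
      measure_univ]
  have hlower : 1 - ENNReal.ofReal (C/n) ≤ P {ω | ∃ t : ℕ, (t:ℝ) ≤ C * Real.log n ∧
      Function.Injective (knPos o (fun s j => X s j ω) t)} := by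
    refine le_trans ?_ (measure_mono hsubset)
    rw [hcompl]
    exact tsub_le_tsub_left hBad 1
  rcases le_or_gt (C / (n:ℝ)) 1 with hCn | hCn
  · have h2 := ENNReal.toReal_mono (measure_ne_top P _) hlower
    have h3 : (1 - ENNReal.ofReal (C/(n:ℝ))).toReal = 1 - C/(n:ℝ) := by
      rw [ENNReal.toReal_sub_of_le (ENNReal.ofReal_le_one.2 hCn) ENNReal.one_ne_top,
        ENNReal.toReal_one, ENNReal.toReal_ofReal (by positivity)]
    rw [ge_iff_le, ← h3]
    exact h2
  · have hneg : 1 - C/(n:ℝ) ≤ 0 := by linarith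
    exact le_trans hneg ENNReal.toReal_nonneg
end

section
/- For the simple symmetric random walk on ℤ started at 0 and any integers T ≥ 1 and 0 ≤ r ≤ T, the probability that the walk returns to the origin exactly r times in the first 2T steps equals 2^{−(2T−r)}·C(2T−r, T). -/
open MeasureTheory ProbabilityTheory
open scoped Classical BigOperators

open Finset
open scoped ENNReal


/-- step of the walk -/
def stp (b : Bool) : ℤ := if b then 1 else -1

/-- position after `t` steps -/
def psum (b : ℕ → Bool) (t : ℕ) : ℤ := ∑ i ∈ Finset.range t, stp (b i)

/-- number of returns to the origin in the first `n` steps -/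
def zers (n : ℕ) (b : ℕ → Bool) : ℕ :=
  ((Finset.Icc 1 n).filter (fun t => psum b t = 0)).card

/-- extend a finite tuple by `false` -/
def ext (n : ℕ) (v : Fin n → Bool) : ℕ → Bool :=
  fun i => if h : i < n then v ⟨i, h⟩ else false

/-- number of length-`n` walks ending at `x` with `j` returns -/
def cnt (n : ℕ) (x : ℤ) (j : ℕ) : ℕ :=
  (Finset.univ.filter
    (fun v : Fin n → Bool => psum (ext n v) n = x ∧ zers n (ext n v) = j)).card

/-- recursive count: length `n`, endpoint `x`, `j` returns -/
def Wc : ℕ → ℤ → ℕ → ℕ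
  | 0, x, j => if x = 0 ∧ j = 0 then 1 else 0
  | (n+1), x, j =>
    if x = 0 then
      (match j with
       | 0 => 0
       | (j'+1) => Wc n (-1) j' + Wc n 1 j')
    else Wc n (x-1) j + Wc n (x+1) j

/-- strictly positive walks of length `m` ending at `y` -/
def posCnt : ℕ → ℕ → ℕ
  | 0, y => if y = 0 then 1 else 0
  | (m+1), y => if y = 0 then 0 else posCnt m (y-1) + posCnt m (y+1)

lemma posCnt_gt (m y : ℕ) (h : m < y) : posCnt m y = 0 := by
  induction m generalizing y with
  | zero => rw [posCnt, if_neg (by omega)]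
  | succ m ih =>
    rw [posCnt, if_neg (by omega), ih (y-1) (by omega), ih (y+1) (by omega)]

lemma posCnt_diag (m : ℕ) : posCnt m m = 1 := by
  induction m with
  | zero => rw [posCnt, if_pos rfl]
  | succ m ih =>
    rw [posCnt, if_neg (by omega)]
    simp only [Nat.add_sub_cancel, ih, posCnt_gt m (m+1+1) (by omega)]

lemma posCnt_zero (m : ℕ) : posCnt (m+1) 0 = 0 := by rw [posCnt, if_pos rfl]

lemma posCnt_rec (m y : ℕ) (hy : 1 ≤ y) :
    posCnt (m+1) y = posCnt m (y-1) + posCnt m (y+1) := by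
  rw [posCnt, if_neg (by omega)]

lemma posCnt_rec' (m y : ℕ) : posCnt (m+1) (y+1) = posCnt m y + posCnt m (y+2) := by
  rw [posCnt, if_neg (by omega)]
  simp [Nat.add_sub_cancel]

/-- closed form for positive walk counts (ballot problem) -/
lemma posCnt_cf : ∀ m a y, 1 ≤ y → m = y + 2*a →
    posCnt (m + 2) y + Nat.choose (m+1) a = Nat.choose (m+1) (a+1) := by
  intro m
  induction m using Nat.strong_induction_on with
  | _ m IH =>
    intro a y hy hm
    rcases y with _ | y
    · omega
    rcases y with _ | y'
    · -- y = 1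
      have h1 : posCnt (m+2) 1 = posCnt (m+1) 0 + posCnt (m+1) 2 := posCnt_rec' (m+1) 0
      rw [h1, posCnt_zero, zero_add]
      rcases a with _ | a'
      · have : m = 1 := by omega
        subst this
        have h2 : posCnt 2 2 = 1 := posCnt_diag 2
        simp [h2]
      · rw [show a'+1+1 = a'+2 from rfl]
        have hm' : m - 1 = 2 + 2*a' := by omega
        have t1 := IH (m-1) (by omega) a' 2 (by norm_num) hm'
        rw [show m - 1 + 2 = m + 1 by omega, show m - 1 + 1 = m by omega] at t1
        have p1 : Nat.choose (m+1) (a'+1) = Nat.choose m a' + Nat.choose m (a'+1) :=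
          Nat.choose_succ_succ m a'
        have p2 : Nat.choose (m+1) (a'+2) = Nat.choose m (a'+1) + Nat.choose m (a'+2) :=
          Nat.choose_succ_succ m (a'+1)
        have sym := Nat.choose_symm (show a'+2 <= m by omega)
        rw [show m - (a'+2) = a'+1 by omega] at sym
        omega
    · -- y = y' + 2
      rw [show y'+1+1 = y'+2 from rfl] at hm ⊢
      have h1 : posCnt (m+2) (y'+2) = posCnt (m+1) (y'+1) + posCnt (m+1) (y'+3) :=
        posCnt_rec' (m+1) (y'+1)
      rw [h1]
      have hm1 : m - 1 = (y'+1) + 2*a := by omega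
      have t1 := IH (m-1) (by omega) a (y'+1) (by omega) hm1
      rw [show m - 1 + 2 = m + 1 by omega, show m - 1 + 1 = m by omega] at t1
      rcases a with _ | a'
      · have hd : posCnt (m+1) (y'+3) = 1 := by
          rw [show (m:ℕ)+1 = y'+3 by omega]; exact posCnt_diag _
        rw [show (0:ℕ)+1 = 1 from rfl]
        have p1 : Nat.choose (m+1) 1 = Nat.choose m 0 + Nat.choose m 1 :=
          Nat.choose_succ_succ m 0
        have c0 : Nat.choose m 0 = 1 := Nat.choose_zero_right m
        have c0' : Nat.choose (m+1) 0 = 1 := Nat.choose_zero_right (m+1)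
        rw [show (0:ℕ)+1 = 1 from rfl] at t1
        omega
      · rw [show a'+1+1 = a'+2 from rfl]
        rw [show a'+1+1 = a'+2 from rfl] at t1
        have hm2 : m - 1 = (y'+3) + 2*a' := by omega
        have t2 := IH (m-1) (by omega) a' (y'+3) (by omega) hm2
        rw [show m - 1 + 2 = m + 1 by omega, show m - 1 + 1 = m by omega] at t2
        have p1 : Nat.choose (m+1) (a'+1) = Nat.choose m a' + Nat.choose m (a'+1) :=
          Nat.choose_succ_succ m a'
        have p2 : Nat.choose (m+1) (a'+2) = Nat.choose m (a'+1) + Nat.choose m (a'+2) :=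
          Nat.choose_succ_succ m (a'+1)
        omega
lemma Wc_base (x : ℤ) (j : ℕ) : Wc 0 x j = if x = 0 ∧ j = 0 then 1 else 0 := rfl

lemma Wc_zero_zero (n : ℕ) : Wc (n+1) 0 0 = 0 := by
  rw [Wc.eq_def]; simp

lemma Wc_zero_succ (n j : ℕ) : Wc (n+1) 0 (j+1) = Wc n (-1) j + Wc n 1 j := by
  rw [Wc.eq_def]; simp

lemma Wc_ne (n : ℕ) (x : ℤ) (j : ℕ) (hx : x ≠ 0) :
    Wc (n+1) x j = Wc n (x-1) j + Wc n (x+1) j := by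
  rw [Wc.eq_def]
  simp only [if_neg hx]
lemma Wc_sym : ∀ n : ℕ, ∀ x : ℤ, ∀ j : ℕ, Wc n x j = Wc n (-x) j := by
  intro n
  induction n with
  | zero => intro x j; simp [Wc_base, neg_eq_zero]
  | succ n ih =>
    intro x j
    by_cases hx : x = 0
    · subst hx; rw [neg_zero]
    · rw [Wc_ne n x j hx, Wc_ne n (-x) j (by simpa using hx)]
      rw [ih (x-1) j, ih (x+1) j, show (-(x-1) : ℤ) = -x+1 by ring,
        show (-(x+1) : ℤ) = -x-1 by ring, add_comm]

lemma Wc_big : ∀ n : ℕ, ∀ x : ℤ, ∀ j : ℕ, n < j → Wc n x j = 0 := by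
  intro n
  induction n with
  | zero =>
    intro x j h
    rw [Wc_base, if_neg (by omega)]
  | succ n ih =>
    intro x j h
    by_cases hx : x = 0
    · subst hx
      rcases j with _ | j'
      · omega
      · rw [Wc_zero_succ, ih _ _ (by omega), ih _ _ (by omega)]
    · rw [Wc_ne n x j hx, ih _ _ (by omega), ih _ _ (by omega)]

lemma Wc_form : ∀ n : ℕ, ∀ j : ℕ, ∀ x : ℤ, j ≤ n → 0 ≤ x →
    Wc n x j = 2^j * posCnt (n - j) (x.toNat + j) := by
  intro n
  induction n with
  | zero =>
    intro j x hj hx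
    interval_cases j
    rw [Wc_base]
    by_cases h0 : x = 0
    · subst h0; simp [posCnt]
    · rw [if_neg (by tauto)]
      have : x.toNat ≠ 0 := by omega
      simp only [Nat.sub_zero, Nat.add_zero]
      rw [posCnt, if_neg this, mul_zero]
  | succ n ih =>
    intro j x hj hx
    by_cases hx0 : x = 0
    · subst hx0
      rcases j with _ | j'
      · rw [Wc_zero_zero]
        simp only [Int.toNat_zero, Nat.sub_zero, Nat.zero_add, Nat.add_zero]
        rw [posCnt_zero, mul_zero]
      · rw [Wc_zero_succ, ← Wc_sym n 1 j', ← two_mul,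
          ih j' 1 (by omega) (by norm_num)]
        have e1 : (1:ℤ).toNat = 1 := rfl
        rw [e1, show (0:ℤ).toNat + (j'+1) = 1 + j' by omega,
          show n + 1 - (j'+1) = n - j' by omega]
        ring
    · have hx1 : 1 ≤ x := by omega
      rw [Wc_ne n x j hx0]
      by_cases hj1 : j ≤ n
      · rw [ih j (x-1) hj1 (by omega), ih j (x+1) hj1 (by omega)]
        have e1 : (x-1).toNat = x.toNat - 1 := by omega
        have e2 : (x+1).toNat = x.toNat + 1 := by omega
        have e3 : 1 ≤ x.toNat := by omega
        rw [e1, e2, ← mul_add]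
        have hrec := posCnt_rec' (n - j) (x.toNat - 1 + j)
        rw [show x.toNat - 1 + j + 1 = x.toNat + j by omega,
          show x.toNat - 1 + j + 2 = x.toNat + 1 + j by omega,
          show n - j + 1 = n + 1 - j by omega] at hrec
        rw [← hrec]
      · have hj2 : j = n + 1 := by omega
        subst hj2
        rw [Wc_big n _ _ (by omega), Wc_big n _ _ (by omega)]
        rw [show n + 1 - (n+1) = 0 by omega, posCnt, if_neg (by omega), mul_zero]
        rfl

/-- telescoping tail sum of positive-path counts -/
lemma tail_sum : ∀ A r : ℕ, ∑ i ∈ Finset.range (A+1), posCnt (r + 2*(A+1)) (r + 2*(i+1))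
    = Nat.choose (r + 2*A + 1) A := by
  intro A
  induction A with
  | zero =>
    intro r
    simp only [Finset.sum_range_one, Nat.choose_zero_right]
    rw [show r + 2*(0+1) = r + 2 by ring]
    exact posCnt_diag _
  | succ A ih =>
    intro r
    rw [Finset.sum_range_succ']
    have e0 : ∀ i : ℕ, posCnt (r + 2*(A+1+1)) (r + 2*(i+1+1))
        = posCnt ((r+2) + 2*(A+1)) ((r+2) + 2*(i+1)) := by
      intro i
      rw [show r + 2*(A+1+1) = (r+2) + 2*(A+1) by ring,
        show r + 2*(i+1+1) = (r+2) + 2*(i+1) by ring]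
    rw [Finset.sum_congr rfl (fun i _ => e0 i), ih (r+2)]
    have cf := posCnt_cf (r+2+2*A) A (r+2) (by omega) (by ring)
    rw [show r+2+2*A + 2 = r + 2*(A+1+1) by ring] at cf
    rw [show r + 2*(0+1) = r + 2 by ring, show r + 2*(A+1) + 1 = r+2+2*A+1 by ring]
    omega

/-- the central sum identity -/
lemma main_sum (T r : ℕ) (hr : r ≤ T) :
    ∑ k ∈ Finset.range (2*T+1), Wc (2*T) (2*(k:ℤ) - 2*(T:ℤ)) r
      = 2^r * Nat.choose (2*T - r) T := by
  have hform : ∀ k : ℕ, Wc (2*T) (2*(k:ℤ) - 2*(T:ℤ)) r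
      = 2^r * posCnt (2*T - r) ((2*(k:ℤ) - 2*(T:ℤ)).toNat + ((2*(T:ℤ)) - 2*(k:ℤ)).toNat + r) := by
    intro k
    rcases le_or_gt (T:ℤ) k with h | h
    · rw [Wc_form (2*T) r _ (by omega) (by omega)]
      congr 2
      omega
    · rw [Wc_sym, show (-(2*(k:ℤ) - 2*T)) = 2*(T:ℤ) - 2*k by ring,
        Wc_form (2*T) r _ (by omega) (by omega)]
      congr 2
      omega
  rw [Finset.sum_congr rfl (fun k _ => hform k)]
  rw [Finset.range_eq_Ico, ← Finset.sum_Ico_consecutive _ (Nat.zero_le T) (by omega : T ≤ 2*T+1)]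
  rw [← Finset.range_eq_Ico, Finset.sum_Ico_eq_sum_range,
    show 2*T+1 - T = T+1 by omega]
  have part1 : ∑ k ∈ Finset.range T,
      2^r * posCnt (2*T - r) ((2*(k:ℤ) - 2*(T:ℤ)).toNat + ((2*(T:ℤ)) - 2*(k:ℤ)).toNat + r)
      = ∑ k ∈ Finset.range T, 2^r * posCnt (2*T - r) (2*(k+1) + r) := by
    rw [← Finset.sum_range_reflect]
    apply Finset.sum_congr rfl
    intro k hk
    simp only [Finset.mem_range] at hk
    congr 2
    omega
  have part2 : ∑ i ∈ Finset.range (T+1),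
      2^r * posCnt (2*T - r) ((2*((T+i:ℕ):ℤ) - 2*(T:ℤ)).toNat + ((2*(T:ℤ)) - 2*((T+i:ℕ):ℤ)).toNat + r)
      = ∑ i ∈ Finset.range (T+1), 2^r * posCnt (2*T - r) (2*i + r) := by
    apply Finset.sum_congr rfl
    intro i _
    congr 2
    push_cast
    omega
  rw [part1, part2, Finset.sum_range_succ']
  have part3 : ∑ i ∈ Finset.range T, 2^r * posCnt (2*T - r) (2*(i+1) + r)
      = 2^r * ∑ i ∈ Finset.range T, posCnt (2*T - r) (2*(i+1) + r) :=
    (Finset.mul_sum _ _ _).symm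
  have part4 : ∑ i ∈ Finset.range T, 2^r * posCnt (2*T - r) (2*(i+1) + r)
      = ∑ i ∈ Finset.range T, 2^r * posCnt (2*T - r) (2*i+1+1 + r) := by
    apply Finset.sum_congr rfl
    intro i _
    congr 2 <;> omega
  rw [part4] at part3
  rw [part1.symm.trans (part1.trans part4)] at part1
  rw [part4, part3, show 2*(0:ℕ) + r = r from by omega]
  have key : posCnt (2*T-r) r + ((∑ i ∈ Finset.range T, posCnt (2*T - r) (2*i+1+1 + r))
      + (∑ i ∈ Finset.range T, posCnt (2*T - r) (2*i+1+1 + r)))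
      = Nat.choose (2*T - r) T := by
    rcases Nat.eq_or_lt_of_le hr with hrT | hrT
    · subst hrT
      have hz : ∀ k ∈ Finset.range r, posCnt (2*r - r) (2*k+1+1 + r) = 0 := by
        intro k _
        exact posCnt_gt _ _ (by omega)
      have e : 2*r - r = r := by omega
      rw [Finset.sum_congr rfl hz, Finset.sum_const_zero, e, posCnt_diag]
      simp
    · have hsum : ∑ i ∈ Finset.range T, posCnt (2*T - r) (2*i+1+1 + r)
          = Nat.choose (2*T - r - 1) (T - r - 1) := by
        rw [Finset.range_eq_Ico,
          ← Finset.sum_Ico_consecutive _ (Nat.zero_le (T-r)) (by omega : T-r ≤ T),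
          ← Finset.range_eq_Ico]
        have hz : ∑ i ∈ Finset.Ico (T-r) T, posCnt (2*T - r) (2*i+1+1 + r) = 0 := by
          apply Finset.sum_eq_zero
          intro i hi
          simp only [Finset.mem_Ico] at hi
          exact posCnt_gt _ _ (by omega)
        rw [hz, add_zero]
        have ts := tail_sum (T - r - 1) r
        rw [show T - r - 1 + 1 = T - r by omega] at ts
        rw [show r + 2*(T-r) = 2*T - r by omega] at ts
        rw [show r + 2*(T-r-1) + 1 = 2*T - r - 1 by omega] at ts
        rw [← ts]
        apply Finset.sum_congr rfl
        intro i _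
        congr 1
        omega
      rw [hsum]
      rcases Nat.eq_zero_or_pos r with hr0 | hr0
      · subst hr0
        have h0 : posCnt (2*T) 0 = 0 := by
          rw [show 2*T = (2*T - 1) + 1 by omega]
          exact posCnt_zero _
        have p : Nat.choose (2*T) T = Nat.choose (2*T-1) (T-1) + Nat.choose (2*T-1) T := by
          rw [show 2*T = (2*T-1)+1 by omega, show T = (T-1)+1 by omega, Nat.choose_succ_succ]
          congr 2 <;> omega
        have sym : Nat.choose (2*T-1) T = Nat.choose (2*T-1) (T-1) := by
          rw [← Nat.choose_symm (show T ≤ 2*T-1 by omega)]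
          congr 1
          omega
        simp only [Nat.sub_zero] at *
        omega
      · have cf := posCnt_cf (r + 2*(T - r - 1)) (T - r - 1) r (by omega) rfl
        rw [show r + 2*(T-r-1) + 2 = 2*T - r by omega,
          show r + 2*(T-r-1) + 1 = 2*T - r - 1 by omega,
          show T - r - 1 + 1 = T - r by omega] at cf
        have p : Nat.choose (2*T - r) (T - r)
            = Nat.choose (2*T-r-1) (T-r-1) + Nat.choose (2*T-r-1) (T-r) := by
          rw [show 2*T - r = (2*T-r-1)+1 by omega, show T - r = (T-r-1)+1 by omega,
            Nat.choose_succ_succ]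
          congr 2 <;> omega
        have sym : Nat.choose (2*T - r) (T - r) = Nat.choose (2*T - r) T := by
          rw [← Nat.choose_symm (show T ≤ 2*T-r by omega)]
          congr 1
          omega
        omega
  calc 2^r * ∑ i ∈ Finset.range T, posCnt (2*T - r) (2*i+1+1 + r)
        + (2^r * ∑ i ∈ Finset.range T, posCnt (2*T - r) (2*i+1+1 + r)
          + 2^r * posCnt (2*T - r) r)
      = 2^r * (posCnt (2*T-r) r + ((∑ i ∈ Finset.range T, posCnt (2*T - r) (2*i+1+1 + r))
        + (∑ i ∈ Finset.range T, posCnt (2*T - r) (2*i+1+1 + r)))) := by ring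
    _ = 2^r * Nat.choose (2*T - r) T := by rw [key]
lemma psum_congr (b b' : ℕ → Bool) (t : ℕ) (h : ∀ i < t, b i = b' i) :
    psum b t = psum b' t :=
  Finset.sum_congr rfl (fun i hi => by rw [h i (Finset.mem_range.mp hi)])

lemma zers_congr (n : ℕ) (b b' : ℕ → Bool) (h : ∀ i < n, b i = b' i) :
    zers n b = zers n b' := by
  unfold zers
  congr 1
  apply Finset.filter_congr
  intro t ht
  rw [Finset.mem_Icc] at ht
  rw [psum_congr b b' t (fun i hi => h i (lt_of_lt_of_le hi ht.2))]

lemma ext_lt (n : ℕ) (v : Fin n → Bool) (i : ℕ) (h : i < n) : ext n v i = v ⟨i, h⟩ :=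
  dif_pos h

lemma ext_snoc_lt (n : ℕ) (v : Fin n → Bool) (b : Bool) (i : ℕ) (h : i < n) :
    ext (n+1) (Fin.snoc v b) i = ext n v i := by
  rw [ext_lt (n+1) _ i (Nat.lt_succ_of_lt h), ext_lt n _ i h]
  have e : (⟨i, Nat.lt_succ_of_lt h⟩ : Fin (n+1)) = Fin.castSucc ⟨i, h⟩ := rfl
  rw [e, Fin.snoc_castSucc]

lemma ext_snoc_last (n : ℕ) (v : Fin n → Bool) (b : Bool) :
    ext (n+1) (Fin.snoc v b) n = b := by
  rw [ext_lt (n+1) _ n (Nat.lt_succ_self n)]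
  have e : (⟨n, Nat.lt_succ_self n⟩ : Fin (n+1)) = Fin.last n := rfl
  rw [e, Fin.snoc_last]

lemma psum_snoc (n : ℕ) (v : Fin n → Bool) (b : Bool) (t : ℕ) (h : t ≤ n) :
    psum (ext (n+1) (Fin.snoc v b)) t = psum (ext n v) t :=
  psum_congr _ _ t (fun i hi => ext_snoc_lt n v b i (lt_of_lt_of_le hi h))

lemma psum_snoc_top (n : ℕ) (v : Fin n → Bool) (b : Bool) :
    psum (ext (n+1) (Fin.snoc v b)) (n+1) = psum (ext n v) n + stp b := by
  rw [psum, Finset.sum_range_succ, ext_snoc_last]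
  congr 1
  exact psum_snoc n v b n le_rfl

lemma zers_snoc (n : ℕ) (v : Fin n → Bool) (b : Bool) :
    zers (n+1) (ext (n+1) (Fin.snoc v b))
      = zers n (ext n v) + (if psum (ext n v) n + stp b = 0 then 1 else 0) := by
  unfold zers
  rw [show Finset.Icc 1 (n+1) = insert (n+1) (Finset.Icc 1 n) by
    ext t; simp only [Finset.mem_Icc, Finset.mem_insert]; omega]
  rw [Finset.filter_insert]
  have hcong : (Finset.Icc 1 n).filter (fun t => psum (ext (n+1) (Fin.snoc v b)) t = 0)
      = (Finset.Icc 1 n).filter (fun t => psum (ext n v) t = 0) := by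
    apply Finset.filter_congr
    intro t ht
    rw [Finset.mem_Icc] at ht
    rw [psum_snoc n v b t ht.2]
  rw [psum_snoc_top]
  by_cases hc : psum (ext n v) n + stp b = 0
  · rw [if_pos hc, if_pos hc, Finset.card_insert_of_notMem (fun hmem => by
      simp only [Finset.mem_filter, Finset.mem_Icc] at hmem; omega), hcong]
  · rw [if_neg hc, if_neg hc, hcong, add_zero]

lemma cnt_eq : ∀ n : ℕ, ∀ x : ℤ, ∀ j : ℕ, cnt n x j = Wc n x j := by
  intro n
  induction n with
  | zero =>
    intro x j
    rw [cnt, Wc_base]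
    have e1 : ∀ v : Fin 0 → Bool, psum (ext 0 v) 0 = 0 := fun v => rfl
    have e2 : ∀ v : Fin 0 → Bool, zers 0 (ext 0 v) = 0 := fun v => by
      unfold zers
      rw [show Finset.Icc 1 0 = (∅ : Finset ℕ) by decide]
      rfl
    by_cases h : x = 0 ∧ j = 0
    · rw [if_pos h]
      rw [Finset.filter_true_of_mem (fun v _ => by rw [e1 v, e2 v]; exact ⟨h.1.symm, h.2.symm⟩)]
      rw [Finset.card_univ]
      simp
    · rw [if_neg h, Finset.card_eq_zero, Finset.filter_eq_empty_iff]
      intro v _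
      rw [e1 v, e2 v]
      rintro ⟨h1, h2⟩
      exact h ⟨h1.symm, h2.symm⟩
  | succ n ih =>
    intro x j
    rw [cnt, Finset.card_filter]
    rw [← Equiv.sum_comp (Fin.snocEquiv (fun _ => Bool))
      (fun w => if (psum (ext (n+1) w) (n+1) = x ∧ zers (n+1) (ext (n+1) w) = j)
        then (1:ℕ) else 0)]
    rw [Fintype.sum_prod_type, Fintype.sum_bool]
    have keyfun : ∀ (b : Bool) (v : Fin n → Bool),
        (Fin.snocEquiv (fun _ => Bool)) (b, v) = Fin.snoc v b := by
      intro b v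
      funext i
      simp [Fin.snocEquiv]
    have hsnoc : ∀ (b : Bool) (v : Fin n → Bool),
        (psum (ext (n+1) (Fin.snoc v b)) (n+1) = x ∧ zers (n+1) (ext (n+1) (Fin.snoc v b)) = j)
        ↔ (psum (ext n v) n = x - stp b
            ∧ zers n (ext n v) + (if x = 0 then 1 else 0) = j) := by
      intro b v
      rw [psum_snoc_top, zers_snoc]
      constructor
      · rintro ⟨h1, h2⟩
        refine ⟨by omega, ?_⟩
        rw [h1] at h2
        exact h2
      · rintro ⟨h1, h2⟩
        have e1 : psum (ext n v) n + stp b = x := by omega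
        rw [e1]
        exact ⟨rfl, h2⟩
    have branch : ∀ b : Bool,
        (∑ v : Fin n → Bool,
          if (psum (ext (n+1) ((Fin.snocEquiv (fun _ => Bool)) (b, v))) (n+1) = x
              ∧ zers (n+1) (ext (n+1) ((Fin.snocEquiv (fun _ => Bool)) (b, v))) = j)
            then (1:ℕ) else 0)
        = ∑ v : Fin n → Bool,
            if (psum (ext n v) n = x - stp b
                ∧ zers n (ext n v) + (if x = 0 then 1 else 0) = j) then (1:ℕ) else 0 := by
      intro b
      apply Finset.sum_congr rfl
      intro v _
      rw [keyfun b v]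
      exact if_congr (hsnoc b v) rfl rfl
    rw [branch true, branch false]
    have tocnt : ∀ (c : ℤ) (j' : ℕ),
        (∑ v : Fin n → Bool,
          if (psum (ext n v) n = c ∧ zers n (ext n v) = j') then (1:ℕ) else 0)
        = cnt n c j' := fun c j' => by rw [cnt, Finset.card_filter]
    by_cases hx : x = 0
    · subst hx
      rcases j with _ | j'
      · rw [Wc_zero_zero]
        have hfalse : ∀ (b : Bool) (v : Fin n → Bool),
            (if (psum (ext n v) n = 0 - stp b
                ∧ zers n (ext n v) + (if (0:ℤ) = 0 then 1 else 0) = 0) then (1:ℕ) else 0) = 0 := by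
          intro b v
          rw [if_neg]
          rintro ⟨_, h2⟩
          rw [if_pos rfl] at h2
          omega
        rw [Finset.sum_congr rfl (fun v _ => hfalse true v),
          Finset.sum_congr rfl (fun v _ => hfalse false v),
          Finset.sum_const_zero, add_zero]
      · rw [Wc_zero_succ]
        have hconv : ∀ (b : Bool) (v : Fin n → Bool),
            (if (psum (ext n v) n = 0 - stp b
                ∧ zers n (ext n v) + (if (0:ℤ) = 0 then 1 else 0) = j'+1) then (1:ℕ) else 0)
            = if (psum (ext n v) n = -stp b ∧ zers n (ext n v) = j') then (1:ℕ) else 0 := by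
          intro b v
          apply if_congr _ rfl rfl
          rw [if_pos rfl]
          constructor
          · rintro ⟨h1, h2⟩; exact ⟨by omega, by omega⟩
          · rintro ⟨h1, h2⟩; exact ⟨by omega, by omega⟩
        rw [Finset.sum_congr rfl (fun v _ => hconv true v),
          Finset.sum_congr rfl (fun v _ => hconv false v), tocnt, tocnt]
        rw [show (-stp true : ℤ) = -1 by simp [stp], show (-stp false : ℤ) = 1 by simp [stp]]
        rw [ih (-1) j', ih 1 j']
    · rw [Wc_ne n x j hx]
      have hconv : ∀ (b : Bool) (v : Fin n → Bool),
          (if (psum (ext n v) n = x - stp b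
              ∧ zers n (ext n v) + (if x = 0 then 1 else 0) = j) then (1:ℕ) else 0)
          = if (psum (ext n v) n = x - stp b ∧ zers n (ext n v) = j) then (1:ℕ) else 0 := by
        intro b v
        apply if_congr _ rfl rfl
        rw [if_neg hx, add_zero]
      rw [Finset.sum_congr rfl (fun v _ => hconv true v),
        Finset.sum_congr rfl (fun v _ => hconv false v), tocnt, tocnt]
      rw [show (x - stp true : ℤ) = x - 1 by simp [stp], show (x - stp false : ℤ) = x + 1 by
        simp [stp]]
      rw [ih (x-1) j, ih (x+1) j]

lemma psum_exists (b : ℕ → Bool) : ∀ t : ℕ, ∃ k, k ≤ t ∧ psum b t = 2*(k:ℤ) - t := by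
  intro t
  induction t with
  | zero => exact ⟨0, le_rfl, by simp [psum]⟩
  | succ t ih =>
    obtain ⟨k, hk, hp⟩ := ih
    have hstep : psum b (t+1) = psum b t + stp (b t) := by
      rw [psum, psum, Finset.sum_range_succ]
    cases hb : b t
    · refine ⟨k, by omega, ?_⟩
      rw [hstep, hp, hb, show stp false = -1 by rfl]
      push_cast
      ring
    · refine ⟨k+1, by omega, ?_⟩
      rw [hstep, hp, hb, show stp true = 1 by rfl]
      push_cast
      ring

lemma card_main (n r : ℕ) :
    (Finset.univ.filter (fun v : Fin n → Bool => zers n (ext n v) = r)).card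
      = ∑ k ∈ Finset.range (n+1), cnt n (2*(k:ℤ) - (n:ℤ)) r := by
  rw [Finset.card_filter]
  have tocnt : ∀ k : ℕ, cnt n (2*(k:ℤ) - n) r
      = ∑ v : Fin n → Bool,
          if (psum (ext n v) n = 2*(k:ℤ) - n ∧ zers n (ext n v) = r) then (1:ℕ) else 0 :=
    fun k => by rw [cnt, Finset.card_filter]
  rw [Finset.sum_congr rfl (fun k _ => tocnt k), Finset.sum_comm]
  apply Finset.sum_congr rfl
  intro v _
  obtain ⟨k0, hk0, hp⟩ := psum_exists (ext n v) n
  by_cases hz : zers n (ext n v) = r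
  · rw [if_pos hz]
    have hcong : ∀ k ∈ Finset.range (n+1),
        (if (psum (ext n v) n = 2*(k:ℤ) - n ∧ zers n (ext n v) = r) then (1:ℕ) else 0)
        = if k = k0 then 1 else 0 := by
      intro k _
      apply if_congr _ rfl rfl
      constructor
      · rintro ⟨h1, _⟩
        rw [hp] at h1
        omega
      · rintro rfl
        exact ⟨hp, hz⟩
    rw [Finset.sum_congr rfl hcong, Finset.sum_ite_eq' (Finset.range (n+1)) k0 (fun _ => 1),
      if_pos (Finset.mem_range.mpr (by omega))]
  · rw [if_neg hz]
    symm
    apply Finset.sum_eq_zero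
    intro k _
    rw [if_neg]
    rintro ⟨_, h⟩
    exact hz h

/-- For the simple symmetric random walk on `ℤ` started at `0`, the probability of
exactly `r` returns to the origin in the first `2T` steps (`0 ≤ r ≤ T`) equals
`2^{−(2T−r)}·C(2T−r, T)`. -/
theorem exact_returns_probability :
    ∀ T : ℕ, 1 ≤ T → ∀ r : ℕ, r ≤ T →
    ∀ (Ω : Type) (_ : MeasurableSpace Ω) (P : Measure Ω), IsProbabilityMeasure P →
    ∀ (ξ : ℕ → Ω → Bool),
    (∀ t, Measurable (ξ t)) →
    (∀ t, (P {ω | ξ t ω = true}).toReal = 1 / 2) →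
    iIndepFun ξ P →
    (P {ω | ((Finset.Icc 1 (2 * T)).filter fun t =>
          ∑ i ∈ Finset.range t, (if ξ i ω then (1 : ℤ) else -1) = 0).card = r}).toReal =
      (Nat.choose (2 * T - r) T : ℝ) / 2 ^ (2 * T - r) := by
  intro T hT r hr Ω mΩ P hP ξ hmeas hhalf hind
  have htop : ∀ s : Set Ω, P s ≠ ⊤ := fun s => measure_ne_top P s
  have Ptrue : ∀ t, P {ω | ξ t ω = true} = 2⁻¹ := by
    intro t
    have h1 : P {ω | ξ t ω = true} = ENNReal.ofReal ((P {ω | ξ t ω = true}).toReal) :=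
      (ENNReal.ofReal_toReal (htop _)).symm
    rw [h1, hhalf t, show (1:ℝ)/2 = (2:ℝ)⁻¹ by norm_num,
      ENNReal.ofReal_inv_of_pos (by norm_num)]
    norm_num
  have hmeasT : ∀ (t : ℕ) (c : Bool), MeasurableSet {ω | ξ t ω = c} := fun t c =>
    (hmeas t) (measurableSet_singleton c)
  have Pfalse : ∀ t, P {ω | ξ t ω = false} = 2⁻¹ := by
    intro t
    have hcomp : {ω | ξ t ω = false} = {ω | ξ t ω = true}ᶜ := by
      ext ω
      simp [Bool.not_eq_true]
    rw [hcomp, measure_compl (hmeasT t true) (htop _), measure_univ, Ptrue t]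
    exact ENNReal.one_sub_inv_two
  have Pv : ∀ (t : ℕ) (c : Bool), P {ω | ξ t ω = c} = 2⁻¹ := fun t c => by
    cases c
    · exact Pfalse t
    · exact Ptrue t
  set n := 2 * T with hn
  have cylP : ∀ v : Fin n → Bool,
      P (⋂ i ∈ Finset.range n, {ω | ξ i ω = ext n v i}) = 2⁻¹ ^ n := by
    intro v
    have hmul := hind.measure_inter_preimage_eq_mul (Finset.range n)
      (sets := fun i => {ext n v i}) (fun i _ => measurableSet_singleton _)
    have hsets : (⋂ i ∈ Finset.range n, {ω | ξ i ω = ext n v i})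
        = ⋂ i ∈ Finset.range n, ξ i ⁻¹' (fun i => ({ext n v i} : Set Bool)) i := rfl
    rw [hsets, hmul]
    exact (Finset.prod_congr rfl (fun i _ => Pv i (ext n v i))).trans
      (by rw [Finset.prod_const, Finset.card_range])
  set S := Finset.univ.filter (fun v : Fin n → Bool => zers n (ext n v) = r) with hSdef
  have Edec : {ω | zers n (fun i => ξ i ω) = r}
      = ⋃ v ∈ S, ⋂ i ∈ Finset.range n, {ω | ξ i ω = ext n v i} := by
    ext ω
    simp only [Set.mem_setOf_eq, Set.mem_iUnion, Set.mem_iInter, hSdef, Finset.mem_filter,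
      Finset.mem_univ, true_and, Finset.mem_range, exists_prop]
    constructor
    · intro h
      refine ⟨fun i => ξ i ω, ?_, ?_⟩
      · rw [zers_congr n (ext n (fun i : Fin n => ξ i ω)) (fun i => ξ i ω)
          (fun i hi => ext_lt n _ i hi)]
        exact h
      · intro i hi
        exact (ext_lt n (fun i : Fin n => ξ i ω) i hi).symm
    · rintro ⟨v, hv, hvv⟩
      rw [zers_congr n (fun i => ξ i ω) (ext n v) (fun i hi => hvv i hi)]
      exact hv
  have hdisj : (↑S : Set (Fin n → Bool)).PairwiseDisjoint
      (fun v => ⋂ i ∈ Finset.range n, {ω | ξ i ω = ext n v i}) := by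
    intro v _ v' _ hne
    rw [Function.onFun, Set.disjoint_left]
    intro ω hω hω'
    simp only [Set.mem_iInter, Finset.mem_range, Set.mem_setOf_eq] at hω hω'
    apply hne
    funext i
    have h1 := hω i i.isLt
    have h2 := hω' i i.isLt
    rw [ext_lt n v i.val i.isLt] at h1
    rw [ext_lt n v' i.val i.isLt] at h2
    have : v ⟨i.val, i.isLt⟩ = v' ⟨i.val, i.isLt⟩ := h1.symm.trans h2
    simpa using this
  have PE : P {ω | zers n (fun i => ξ i ω) = r} = (S.card : ℝ≥0∞) * 2⁻¹ ^ n := by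
    rw [Edec, measure_biUnion_finset hdisj (fun v _ =>
      MeasurableSet.biInter (Finset.range n).countable_toSet (fun i _ => hmeasT i _))]
    rw [Finset.sum_congr rfl (fun v _ => cylP v), Finset.sum_const, nsmul_eq_mul]
  have hcard : S.card = 2^r * Nat.choose (2*T - r) T := by
    rw [hSdef, card_main n r, Finset.sum_congr rfl (fun k _ => cnt_eq n _ r)]
    have hcast : ∀ k : ℕ, Wc n (2*(k:ℤ) - (n:ℤ)) r = Wc (2*T) (2*(k:ℤ) - 2*(T:ℤ)) r := by
      intro k
      rw [hn]
      push_cast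
      ring_nf
    rw [Finset.sum_congr rfl (fun k _ => hcast k)]
    exact main_sum T r hr
  have hEvent : {ω | ((Finset.Icc 1 (2*T)).filter fun t =>
        ∑ i ∈ Finset.range t, (if ξ i ω then (1:ℤ) else -1) = 0).card = r}
      = {ω | zers n (fun i => ξ i ω) = r} := rfl
  rw [hEvent, PE, ENNReal.toReal_mul, ENNReal.toReal_pow, ENNReal.toReal_inv]
  rw [hcard]
  have h2 : (2 : ℝ≥0∞).toReal = (2:ℝ) := by norm_num
  rw [h2]
  have hsplit : (2:ℝ)^(2*T) = 2^(2*T - r) * 2^r := by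
    rw [← pow_add]
    congr 1
    omega
  rw [ENNReal.toReal_natCast, hn]
  push_cast
  rw [inv_pow, hsplit]
  field_simp
end

section
/- For all integers T ≥ 1 and 1 ≤ r < T, one has (1 − r/(2T))^{2T−r} / (1 − r/T)^{T−r} ≤ exp(−r²/(4T)). -/
/-- The elementary inequality `(1 − r/(2T))^{2T−r} / (1 − r/T)^{T−r} ≤ exp(−r²/(4T))`
for integers `1 ≤ r < T`. -/
theorem pow_ratio_le_exp (T r : ℕ) (hT : 1 ≤ T) (hr : 1 ≤ r) (hrT : r < T) :
    (1 - (r : ℝ) / (2 * T)) ^ (2 * T - r) / (1 - (r : ℝ) / T) ^ (T - r) ≤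
      Real.exp (-(r : ℝ) ^ 2 / (4 * T)) := by
  have ht0 : (0:ℝ) < T := by exact_mod_cast Nat.lt_of_lt_of_le Nat.zero_lt_one hT
  have hat : (r:ℝ) < T := by exact_mod_cast hrT
  have ha0 : (0:ℝ) < r := by exact_mod_cast Nat.lt_of_lt_of_le Nat.zero_lt_one hr
  set t : ℝ := (T:ℝ)
  set a : ℝ := (r:ℝ)
  have hta : 0 < t - a := by linarith
  have hx : (0:ℝ) < 1 - a / (2 * t) := by
    rw [sub_pos, div_lt_one (by linarith)]; linarith
  have hy : (0:ℝ) < 1 - a / t := by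
    rw [sub_pos, div_lt_one ht0]; linarith
  set q : ℝ := (a / (2 * t)) ^ 2 / (1 - a / t) with hq
  have hq0 : 0 ≤ q := by positivity
  -- rewrite exponent 2T - r = r + 2*(T - r)
  have hkey : 2 * T - r = r + 2 * (T - r) := by omega
  rw [hkey, pow_add, pow_mul, mul_div_assoc, ← div_pow]
  -- bound each factor
  have h1 : 1 - a / (2 * t) ≤ Real.exp (-(a / (2 * t))) := by
    have := Real.add_one_le_exp (-(a / (2 * t))); linarith
  have h2 : (1 - a / (2 * t)) ^ 2 / (1 - a / t) ≤ Real.exp q := by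
    have hid : (1 - a / (2 * t)) ^ 2 / (1 - a / t) = 1 + q := by
      rw [hq]; field_simp; ring
    rw [hid]
    have := Real.add_one_le_exp q; linarith
  calc (1 - a / (2 * t)) ^ r * ((1 - a / (2 * t)) ^ 2 / (1 - a / t)) ^ (T - r)
      ≤ Real.exp (-(a / (2 * t))) ^ r * Real.exp q ^ (T - r) := by
        apply mul_le_mul (pow_le_pow_left₀ hx.le h1 r)
          (pow_le_pow_left₀ (by positivity) h2 (T - r)) (by positivity) (by positivity)
    _ = Real.exp ((r : ℝ) * (-(a / (2 * t))) + ((T - r : ℕ) : ℝ) * q) := by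
        rw [Real.exp_add, Real.exp_nat_mul, Real.exp_nat_mul]
    _ = Real.exp (-a ^ 2 / (4 * t)) := by
        congr 1
        have hcast : ((T - r : ℕ) : ℝ) = t - a := by
          push_cast [Nat.cast_sub hrT.le]; ring
        rw [hcast, hq]
        field_simp
        ring
end

section
/- Let V be a finite set, let O : V → ℕ satisfy O_v ≥ 2 for all v ∈ V and ∑_{v∈V} O_v = U, let 0 < p ≤ 1 be real, and let n ≥ 1 be an integer with U·p ≤ n. Then ∑_{v∈V} p^{O_v}·(1 − 1/n)^{O_v}·(1 − p/n)^{U − O_v} ≤ (U·p²/2)·(1 − U·p/(2n)). -/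
open scoped BigOperators

lemma pow_one_sub_le (x : ℝ) (hx0 : 0 ≤ x) (hx1 : x ≤ 1) :
    ∀ U : ℕ, (U : ℝ) * x ≤ 1 → (1 - x) ^ U ≤ 1 - (U : ℝ) * x / 2 := by
  intro U
  induction U with
  | zero => intro _; simp
  | succ k ih =>
    intro h
    push_cast at h
    have hk : (k : ℝ) * x ≤ 1 := by nlinarith
    have ihk := ih hk
    have h1x : (0 : ℝ) ≤ 1 - x := by linarith
    calc (1 - x) ^ (k + 1) = (1 - x) ^ k * (1 - x) := by ring
      _ ≤ (1 - (k : ℝ) * x / 2) * (1 - x) :=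
          mul_le_mul_of_nonneg_right ihk h1x
      _ ≤ 1 - ((k + 1 : ℕ) : ℝ) * x / 2 := by push_cast; nlinarith

/-- Finitary inequality bounding the expected number of occupied vertices becoming empty
in one step of the lazy dispersion process on `K_n` with loops:
`∑_{v∈V} p^{O_v}·(1 − 1/n)^{O_v}·(1 − p/n)^{U − O_v} ≤ (U·p²/2)·(1 − U·p/(2n))`. -/
theorem lazy_emptying_bound (V : Type) [Fintype V] (O : V → ℕ) (U n : ℕ) (p : ℝ)
    (hO : ∀ v, 2 ≤ O v) (hU : ∑ v, O v = U) (hp0 : 0 < p) (hp1 : p ≤ 1)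
    (hn : 1 ≤ n) (hUp : (U : ℝ) * p ≤ n) :
    ∑ v, p ^ (O v) * (1 - 1 / (n : ℝ)) ^ (O v) * (1 - p / n) ^ (U - O v) ≤
      ((U : ℝ) * p ^ 2 / 2) * (1 - (U : ℝ) * p / (2 * n)) := by
  have hn0 : (0 : ℝ) < n := by exact_mod_cast hn
  have hn1 : (1 : ℝ) ≤ n := by exact_mod_cast hn
  have hpn1 : p / n ≤ 1 := by rw [div_le_one hn0]; linarith
  have hpn0 : 0 ≤ p / n := le_of_lt (div_pos hp0 hn0)
  have h1n : (0 : ℝ) ≤ 1 - 1 / n := by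
    have : 1 / (n : ℝ) ≤ 1 := by rw [div_le_one hn0]; exact hn1
    linarith
  have hle : 1 - 1 / (n : ℝ) ≤ 1 - p / n := by gcongr
  -- each O v ≤ U
  have hOU : ∀ v, O v ≤ U := by
    intro v
    rw [← hU]
    exact Finset.single_le_sum (fun i _ => Nat.zero_le _) (Finset.mem_univ v)
  -- per-term bound
  have hterm : ∀ v, p ^ (O v) * (1 - 1 / (n : ℝ)) ^ (O v) * (1 - p / n) ^ (U - O v)
      ≤ p ^ 2 * (1 - p / n) ^ U := by
    intro v
    have h1 : p ^ (O v) ≤ p ^ 2 := pow_le_pow_of_le_one hp0.le hp1 (hO v)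
    have h2 : (1 - 1 / (n : ℝ)) ^ (O v) * (1 - p / n) ^ (U - O v)
        ≤ (1 - p / n) ^ (O v) * (1 - p / n) ^ (U - O v) := by
      apply mul_le_mul_of_nonneg_right (pow_le_pow_left₀ h1n hle _)
      exact pow_nonneg (by linarith) _
    have h3 : (1 - p / n) ^ (O v) * (1 - p / n) ^ (U - O v) = (1 - p / n) ^ U := by
      rw [← pow_add, Nat.add_sub_cancel' (hOU v)]
    calc p ^ (O v) * (1 - 1 / (n : ℝ)) ^ (O v) * (1 - p / n) ^ (U - O v)
        ≤ p ^ 2 * ((1 - 1 / (n : ℝ)) ^ (O v) * (1 - p / n) ^ (U - O v)) := by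
          rw [mul_assoc]
          apply mul_le_mul_of_nonneg_right h1
          exact mul_nonneg (pow_nonneg h1n _) (pow_nonneg (by linarith) _)
      _ ≤ p ^ 2 * ((1 - p / n) ^ U) := by
          rw [← h3]
          exact mul_le_mul_of_nonneg_left h2 (sq_nonneg p)
  have hcard : 2 * (Fintype.card V : ℝ) ≤ U := by
    have : 2 * Fintype.card V ≤ U := by
      rw [← hU]
      calc 2 * Fintype.card V = ∑ _v : V, 2 := by
            rw [Finset.sum_const, Finset.card_univ, smul_eq_mul, mul_comm]
        _ ≤ ∑ v, O v := Finset.sum_le_sum (fun v _ => hO v)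
    exact_mod_cast this
  have hpow : (1 - p / n) ^ U ≤ 1 - (U : ℝ) * (p / n) / 2 := by
    apply pow_one_sub_le _ hpn0 hpn1
    calc (U : ℝ) * (p / n) = (U : ℝ) * p / n := by ring
      _ ≤ 1 := by rw [div_le_one hn0]; exact hUp
  have hc0 : (0:ℝ) ≤ (1 - p / n) ^ U := pow_nonneg (by linarith) _
  calc ∑ v, p ^ (O v) * (1 - 1 / (n : ℝ)) ^ (O v) * (1 - p / n) ^ (U - O v)
      ≤ ∑ _v : V, p ^ 2 * (1 - p / n) ^ U := Finset.sum_le_sum (fun v _ => hterm v)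
    _ = (Fintype.card V : ℝ) * (p ^ 2 * (1 - p / n) ^ U) := by
        rw [Finset.sum_const, Finset.card_univ, nsmul_eq_mul]
    _ ≤ ((U : ℝ) * p ^ 2 / 2) * (1 - (U : ℝ) * p / (2 * n)) := by
        have key : (1 - p / n) ^ U ≤ 1 - (U : ℝ) * p / (2 * n) := by
          refine hpow.trans (le_of_eq ?_)
          field_simp
        have hrhs0 : (0:ℝ) ≤ 1 - (U : ℝ) * p / (2 * n) := by
          have : (U : ℝ) * p / (2 * n) ≤ 1 / 2 := by
            rw [div_le_div_iff₀ (by linarith) (by norm_num)]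
            linarith
          linarith
        calc (Fintype.card V : ℝ) * (p ^ 2 * (1 - p / n) ^ U)
            ≤ ((U : ℝ) / 2) * (p ^ 2 * (1 - p / n) ^ U) := by
              apply mul_le_mul_of_nonneg_right (by linarith) (mul_nonneg (sq_nonneg p) hc0)
          _ ≤ ((U : ℝ) / 2) * (p ^ 2 * (1 - (U : ℝ) * p / (2 * n))) := by
              apply mul_le_mul_of_nonneg_left _ (by positivity)
              exact mul_le_mul_of_nonneg_left key (sq_nonneg p)
          _ = ((U : ℝ) * p ^ 2 / 2) * (1 - (U : ℝ) * p / (2 * n)) := by ring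
end

section
/- For all real numbers δ and ε with 0 ≤ δ ≤ 1 and 0 ≤ ε ≤ δ/2, one has e^{(ε−δ)/2}·(1 + δ/2 + (ε/2)(1 − δ) + ε²/2) ≤ 1 + (δ/2)·(1 − 3δ/8). -/
/-- The core estimate for dispersion on the complete graph with more than `(1+δ)n/2`
particles: for `0 ≤ δ ≤ 1` and `0 ≤ ε ≤ δ/2`,
`e^{(ε−δ)/2}·(1 + δ/2 + (ε/2)(1 − δ) + ε²/2) ≤ 1 + (δ/2)·(1 − 3δ/8)`. -/
theorem exp_mul_poly_le (δ ε : ℝ) (hδ0 : 0 ≤ δ) (hδ1 : δ ≤ 1) (hε0 : 0 ≤ ε)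
    (hε : ε ≤ δ / 2) :
    Real.exp ((ε - δ) / 2) * (1 + δ / 2 + (ε / 2) * (1 - δ) + ε ^ 2 / 2) ≤
      1 + (δ / 2) * (1 - 3 * δ / 8) := by
  have hx : (0:ℝ) < 1 + (δ - ε) / 2 := by linarith
  have h1 : 1 + (δ - ε) / 2 ≤ Real.exp ((δ - ε) / 2) := by have := Real.add_one_le_exp ((δ - ε) / 2); linarith
  have h2 : Real.exp ((ε - δ) / 2) ≤ 1 / (1 + (δ - ε) / 2) := by
    rw [le_div_iff₀ hx]
    calc Real.exp ((ε - δ) / 2) * (1 + (δ - ε) / 2)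
        ≤ Real.exp ((ε - δ) / 2) * Real.exp ((δ - ε) / 2) := by
          exact mul_le_mul_of_nonneg_left h1 (Real.exp_pos _).le
      _ = 1 := by rw [← Real.exp_add]; ring_nf; exact Real.exp_zero
  have hP : (0:ℝ) ≤ 1 + δ / 2 + (ε / 2) * (1 - δ) + ε ^ 2 / 2 := by nlinarith
  have h3 : Real.exp ((ε - δ) / 2) * (1 + δ / 2 + (ε / 2) * (1 - δ) + ε ^ 2 / 2)
      ≤ (1 / (1 + (δ - ε) / 2)) * (1 + δ / 2 + (ε / 2) * (1 - δ) + ε ^ 2 / 2) :=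
    mul_le_mul_of_nonneg_right h2 hP
  refine h3.trans ?_
  rw [div_mul_eq_mul_div, div_le_iff₀ hx]
  nlinarith [sq_nonneg (δ - 2*ε), sq_nonneg δ, sq_nonneg ε, mul_nonneg hε0 hδ0]
end
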